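/- arXiv:1603.05876 — 3 statements merged into one kernel-verified Lean document; each statement's English description precedes it below -/
import Mathlib

section
/- For every n ∈ ℕ, every (x_1, …, x_n) ∈ X^n, and every u ∈ ℝ^n, one has ∑_{i_1,…,i_m = 1}^n K(x_{i_1}, …, x_{i_m}) u_{i_1} ⋯ u_{i_m} ≥ 0; that is, the tensor (K(x_{i_1},…,x_{i_m}))_{(i_1,…,i_m)∈{1,…,n}^m} of order m is positive definite. -/
/-- Positive definiteness of the tensor kernel: for every `n`, points `x_1,…,x_n ∈ X` and
`u ∈ ℝ^n`, `∑_{i_1,…,i_m} K(x_{i_1},…,x_{i_m}) u_{i_1}⋯u_{i_m} ≥ 0`, where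
`K(x'_1,…,x'_m) = ∑_k φ_k(x'_1)⋯φ_k(x'_m)`. -/
theorem stmt_3 {𝕂 X : Type*} [Countable 𝕂] [Nonempty X] (m : ℕ) (hm : 2 ≤ m) (hme : Even m)
    (φ : 𝕂 → X → ℝ) (hΦ : ∀ x : X, Summable fun k => |φ k x| ^ m)
    (n : ℕ) (x : Fin n → X) (u : Fin n → ℝ) :
    0 ≤ ∑ iv : Fin m → Fin n, (∑' k, ∏ j, φ k (x (iv j))) * ∏ j, u (iv j) := by
  have key : ∀ iv : Fin m → Fin n, Summable fun k => ∏ j, φ k (x (iv j)) := by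
    intro iv
    have hb : Summable fun k => ∑ j : Fin m, |φ k (x (iv j))| ^ m :=
      summable_sum fun j _ => hΦ (x (iv j))
    refine Summable.of_abs (hb.of_nonneg_of_le (fun k => abs_nonneg _) (fun k => ?_))
    rw [Finset.abs_prod]
    obtain ⟨j0, _, hj0⟩ := Finset.exists_max_image Finset.univ
      (fun j => |φ k (x (iv j))|) ⟨⟨0, by omega⟩, Finset.mem_univ _⟩
    calc ∏ j, |φ k (x (iv j))| ≤ ∏ _j : Fin m, |φ k (x (iv j0))| :=
          Finset.prod_le_prod (fun _ _ => abs_nonneg _) (fun j _ => hj0 j (Finset.mem_univ _))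
      _ = |φ k (x (iv j0))| ^ m := by simp
      _ ≤ ∑ j : Fin m, |φ k (x (iv j))| ^ m :=
          Finset.single_le_sum (f := fun j => |φ k (x (iv j))| ^ m) (fun j _ => pow_nonneg (abs_nonneg _) m) (Finset.mem_univ j0)
  have hmul : ∀ iv : Fin m → Fin n, Summable fun k => ∏ j, (φ k (x (iv j)) * u (iv j)) := by
    intro iv
    simpa [Finset.prod_mul_distrib] using (key iv).mul_right (∏ j, u (iv j))
  have step : ∀ iv : Fin m → Fin n,
      (∑' k, ∏ j, φ k (x (iv j))) * ∏ j, u (iv j)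
        = ∑' k, ∏ j, (φ k (x (iv j)) * u (iv j)) := by
    intro iv
    rw [← tsum_mul_right]
    congr 1; funext k; rw [Finset.prod_mul_distrib]
  simp only [step]
  rw [← Summable.tsum_finsetSum (fun iv _ => hmul iv)]
  refine tsum_nonneg fun k => ?_
  have : ∑ iv : Fin m → Fin n, ∏ j, (φ k (x (iv j)) * u (iv j))
      = (∑ i, φ k (x i) * u i) ^ m := (Fintype.sum_pow (fun i => φ k (x i) * u i) m).symm
  rw [this]
  exact hme.pow_nonneg _
end

section
/- Let n ∈ ℕ, (x_1, …, x_n) ∈ X^n, u ∈ ℝ^n, and c ∈ ℝ, and define w = (w_k)_{k∈𝕂} by w_k = c · (∑_{i=1}^n u_i φ_k(x_i))^{m−1}. Then w belongs to ℓ^r(𝕂) with r = m/(m−1), and for every x ∈ X the family (w_k φ_k(x))_{k∈𝕂} is absolutely summable with ∑_{k∈𝕂} w_k φ_k(x) = c · ∑_{i_1, …, i_{m−1} = 1}^n K(x_{i_1}, …, x_{i_{m−1}}, x) u_{i_1} ⋯ u_{i_{m−1}}. -/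
open Finset

lemma prod_abs_le_sum_pow_card {ι : Type*} [Fintype ι] [Nonempty ι] (a : ι → ℝ) :
    |∏ j, a j| ≤ ∑ j, |a j| ^ (Fintype.card ι) := by
  rw [abs_prod]
  obtain ⟨j₀, -, hj₀⟩ := Finset.exists_max_image Finset.univ (fun j => |a j|)
    ⟨Classical.arbitrary ι, Finset.mem_univ _⟩
  calc ∏ j, |a j| ≤ ∏ _j : ι, |a j₀| :=
        Finset.prod_le_prod (fun _ _ => abs_nonneg _) (fun j _ => hj₀ j (Finset.mem_univ _))
    _ = |a j₀| ^ Fintype.card ι := by rw [Finset.prod_const, Finset.card_univ]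
    _ ≤ ∑ j, |a j| ^ Fintype.card ι :=
        Finset.single_le_sum (f := fun j => |a j| ^ Fintype.card ι)
          (fun j _ => pow_nonneg (abs_nonneg _) _) (Finset.mem_univ j₀)

lemma summable_abs_prod_mul {𝕂 X : Type*} (m : ℕ) (hm : 2 ≤ m)
    (φ : 𝕂 → X → ℝ) (hΦ : ∀ x : X, Summable fun k => |φ k x| ^ m)
    (y : Fin (m - 1) → X) (x₀ : X) :
    Summable fun k => |(∏ j, φ k (y j)) * φ k x₀| := by
  have hle : ∀ k, |(∏ j, φ k (y j)) * φ k x₀| ≤ (∑ j, |φ k (y j)| ^ m) + |φ k x₀| ^ m := by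
    intro k
    have hcard : Fintype.card (Fin (m - 1) ⊕ Unit) = m := by simp; omega
    have h := prod_abs_le_sum_pow_card (ι := Fin (m - 1) ⊕ Unit)
      (Sum.elim (fun j => φ k (y j)) (fun _ => φ k x₀))
    simpa [Fintype.prod_sum_type, Fintype.sum_sum_type, hcard, abs_mul] using h
  exact Summable.of_nonneg_of_le (fun k => abs_nonneg _) hle
    ((summable_sum fun j _ => hΦ (y j)).add (hΦ x₀))

/-- Tensor-kernel representation: if `w_k = c (∑_i u_i φ_k(x_i))^{m-1}`, then
`w ∈ ℓ^r(𝕂)` with `r = m/(m-1)`, and for every `x ∈ X` the family `(w_k φ_k(x))_k` is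
absolutely summable with
`∑_k w_k φ_k(x) = c ∑_{i_1,…,i_{m-1}} K(x_{i_1},…,x_{i_{m-1}}, x) u_{i_1}⋯u_{i_{m-1}}`. -/
theorem stmt_8 {𝕂 X : Type*} [Countable 𝕂] [Nonempty X] (m : ℕ) (hm : 2 ≤ m) (hme : Even m)
    (φ : 𝕂 → X → ℝ) (hΦ : ∀ x : X, Summable fun k => |φ k x| ^ m)
    (n : ℕ) (x : Fin n → X) (u : Fin n → ℝ) (c : ℝ)
    (w : 𝕂 → ℝ) (hw : ∀ k, w k = c * (∑ i, u i * φ k (x i)) ^ (m - 1)) :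
    Summable (fun k => |w k| ^ ((m : ℝ) / ((m : ℝ) - 1))) ∧
      ∀ x₀ : X,
        Summable (fun k => |w k * φ k x₀|) ∧
          ∑' k, w k * φ k x₀
            = c * ∑ iv : Fin (m - 1) → Fin n,
                (∑' k, (∏ j, φ k (x (iv j))) * φ k x₀) * ∏ j, u (iv j) := by
  set S : 𝕂 → ℝ := fun k => ∑ i, u i * φ k (x i) with hS
  have hm1 : ((m - 1 : ℕ) : ℝ) = (m : ℝ) - 1 := by
    have : (1 : ℕ) ≤ m := by omega
    push_cast [this]; ring
  have hmne : (m : ℝ) - 1 ≠ 0 := by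
    have : (2 : ℝ) ≤ (m : ℝ) := by exact_mod_cast hm
    linarith
  -- summability of |S k| ^ m
  have hSm : Summable fun k => |S k| ^ m := by
    have hle : ∀ k, |S k| ^ m ≤ (n : ℝ) ^ (m - 1) * ∑ i, (|u i| * |φ k (x i)|) ^ m := by
      intro k
      have h1 : |S k| ≤ ∑ i, |u i| * |φ k (x i)| := by
        refine (Finset.abs_sum_le_sum_abs _ _).trans_eq ?_
        exact Finset.sum_congr rfl fun i _ => abs_mul _ _
      have h2 : |S k| ^ m ≤ (∑ i, |u i| * |φ k (x i)|) ^ m :=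
        pow_le_pow_left₀ (abs_nonneg _) h1 m
      refine h2.trans ?_
      have h3 := pow_sum_le_card_mul_sum_pow
        (s := (Finset.univ : Finset (Fin n))) (f := fun i => |u i| * |φ k (x i)|)
        (fun i _ => mul_nonneg (abs_nonneg _) (abs_nonneg _)) (m - 1)
      have hm' : m - 1 + 1 = m := by omega
      rw [hm'] at h3
      simpa using h3
    refine Summable.of_nonneg_of_le (fun k => pow_nonneg (abs_nonneg _) _) hle ?_
    refine Summable.mul_left _ (summable_sum fun i _ => ?_)
    have := (hΦ (x i)).mul_left (|u i| ^ m)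
    simpa [mul_pow] using this
  constructor
  · -- ℓ^r summability
    have heq : (fun k => |w k| ^ ((m : ℝ) / ((m : ℝ) - 1)))
        = fun k => |c| ^ ((m : ℝ) / ((m : ℝ) - 1)) * |S k| ^ m := by
      funext k
      rw [hw k, abs_mul, abs_pow,
        Real.mul_rpow (abs_nonneg _) (pow_nonneg (abs_nonneg _) _)]
      congr 1
      rw [← Real.rpow_natCast |S k| (m - 1), ← Real.rpow_mul (abs_nonneg _)]
      rw [hm1]
      rw [show ((m : ℝ) - 1) * ((m : ℝ) / ((m : ℝ) - 1)) = (m : ℝ) by field_simp]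
      exact Real.rpow_natCast _ m
    rw [heq]
    exact hSm.mul_left _
  · intro x₀
    have hterm : ∀ iv : Fin (m - 1) → Fin n,
        Summable fun k => |(∏ j, φ k (x (iv j))) * φ k x₀| :=
      fun iv => summable_abs_prod_mul m hm φ hΦ (fun j => x (iv j)) x₀
    have hexp : ∀ k, w k * φ k x₀ = ∑ iv : Fin (m - 1) → Fin n,
        (c * ∏ j, u (iv j)) * ((∏ j, φ k (x (iv j))) * φ k x₀) := by
      intro k
      rw [hw k, Finset.sum_pow', Fintype.piFinset_univ, Finset.mul_sum, Finset.sum_mul]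
      refine Finset.sum_congr rfl fun iv _ => ?_
      rw [Finset.prod_mul_distrib]; ring
    have h1 : ∀ iv : Fin (m - 1) → Fin n, Summable fun k =>
        (c * ∏ j, u (iv j)) * ((∏ j, φ k (x (iv j))) * φ k x₀) :=
      fun iv => ((hterm iv).of_abs).mul_left _
    constructor
    · have hle : ∀ k, |w k * φ k x₀| ≤
          ∑ iv : Fin (m - 1) → Fin n, |c * ∏ j, u (iv j)| * |(∏ j, φ k (x (iv j))) * φ k x₀| := by
        intro k
        rw [hexp k]
        refine (Finset.abs_sum_le_sum_abs _ _).trans_eq ?_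
        exact Finset.sum_congr rfl fun iv _ => abs_mul _ _
      exact Summable.of_nonneg_of_le (fun k => abs_nonneg _) hle
        (summable_sum fun iv _ => (hterm iv).mul_left _)
    · calc ∑' k, w k * φ k x₀
          = ∑' k, ∑ iv : Fin (m - 1) → Fin n,
              (c * ∏ j, u (iv j)) * ((∏ j, φ k (x (iv j))) * φ k x₀) := tsum_congr hexp
        _ = ∑ iv : Fin (m - 1) → Fin n,
              ∑' k, (c * ∏ j, u (iv j)) * ((∏ j, φ k (x (iv j))) * φ k x₀) :=
            Summable.tsum_finsetSum fun iv _ => h1 iv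
        _ = ∑ iv : Fin (m - 1) → Fin n,
              (c * ∏ j, u (iv j)) * ∑' k, (∏ j, φ k (x (iv j))) * φ k x₀ :=
            Finset.sum_congr rfl fun iv _ => tsum_mul_left
        _ = c * ∑ iv : Fin (m - 1) → Fin n,
              (∑' k, (∏ j, φ k (x (iv j))) * φ k x₀) * ∏ j, u (iv j) := by
            rw [Finset.mul_sum]
            exact Finset.sum_congr rfl fun iv _ => by ring
end

section
/- For every n ∈ ℕ, every (x_1, …, x_n) ∈ X^n, and every u ∈ ℂ^n, one has ‖∑_{i=1}^n u_i Φ(x_i)‖_m^m = ∑_{i_1,…,i_q = 1}^n ∑_{j_1,…,j_q = 1}^n K(x_{j_1}, …, x_{j_q}; x_{i_1}, …, x_{i_q}) u_{i_1} ⋯ u_{i_q} · conj(u_{j_1}) ⋯ conj(u_{j_q}), where Φ(x) = (conj(φ_k(x)))_{k∈𝕂} ∈ ℓ^m(𝕂;ℂ); in particular this multiple sum is a nonnegative real number, i.e. the complex tensor (K(x_{j_1},…,x_{j_q}; x_{i_1},…,x_{i_q})) is positive definite. -/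
lemma aux_prod_mul_prod_le {q : ℕ} (hq : 1 ≤ q) (a b : Fin q → ℝ)
    (ha : ∀ t, 0 ≤ a t) (hb : ∀ t, 0 ≤ b t) :
    (∏ t, a t) * ∏ t, b t ≤ ∑ t, a t ^ (2 * q) + ∑ t, b t ^ (2 * q) := by
  set c : Fin q ⊕ Fin q → ℝ := Sum.elim a b with hc
  have hc0 : ∀ s, 0 ≤ c s := by
    rintro (s | s)
    · exact ha s
    · exact hb s
  have hne : (Finset.univ : Finset (Fin q ⊕ Fin q)).Nonempty := by
    have : Nonempty (Fin q) := ⟨⟨0, hq⟩⟩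
    exact Finset.univ_nonempty
  obtain ⟨t0, -, ht0⟩ := Finset.exists_max_image Finset.univ c hne
  have h1 : (∏ t, a t) * ∏ t, b t = ∏ s, c s := by
    rw [Fintype.prod_sum_type]; simp [hc]
  have h2 : ∏ s, c s ≤ c t0 ^ (2 * q) := by
    calc ∏ s, c s ≤ ∏ _s : Fin q ⊕ Fin q, c t0 :=
          Finset.prod_le_prod (fun s _ => hc0 s) (fun s _ => ht0 s (Finset.mem_univ s))
      _ = c t0 ^ (2 * q) := by
          simp [Finset.prod_const, Fintype.card_sum, two_mul]
  have h3 : c t0 ^ (2 * q) ≤ ∑ t, a t ^ (2 * q) + ∑ t, b t ^ (2 * q) := by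
    rcases t0 with s | s
    · calc c (Sum.inl s) ^ (2 * q) = a s ^ (2 * q) := by simp [hc]
        _ ≤ ∑ t, a t ^ (2 * q) :=
            Finset.single_le_sum (fun t _ => pow_nonneg (ha t) _) (Finset.mem_univ s)
        _ ≤ _ := le_add_of_nonneg_right (Finset.sum_nonneg fun t _ => pow_nonneg (hb t) _)
    · calc c (Sum.inr s) ^ (2 * q) = b s ^ (2 * q) := by simp [hc]
        _ ≤ ∑ t, b t ^ (2 * q) :=
            Finset.single_le_sum (fun t _ => pow_nonneg (hb t) _) (Finset.mem_univ s)
        _ ≤ _ := le_add_of_nonneg_left (Finset.sum_nonneg fun t _ => pow_nonneg (ha t) _)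
  linarith [h1, h2, h3]

/-- Complex tensor-kernel expansion of the `ℓ^m` norm (`m = 2q`): with
`Φ(x) = (conj φ_k(x))_k`, one has
`‖∑_i u_i Φ(x_i)‖_m^m = ∑_{i_1,…,i_q} ∑_{j_1,…,j_q} K(x_{j_1},…,x_{j_q}; x_{i_1},…,x_{i_q})
u_{i_1}⋯u_{i_q} conj(u_{j_1})⋯conj(u_{j_q})`; in particular the multiple sum is a
nonnegative real number, i.e. the complex tensor kernel is positive definite. -/
theorem stmt_16 {𝕂 X : Type*} [Countable 𝕂] [Nonempty X] (q : ℕ) (hq : 1 ≤ q)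
    (φ : 𝕂 → X → ℂ) (hΦ : ∀ x : X, Summable fun k => ‖φ k x‖ ^ (2 * q))
    (n : ℕ) (x : Fin n → X) (u : Fin n → ℂ) :
    ((∑' k : 𝕂, ‖∑ i, u i * (starRingEnd ℂ) (φ k (x i))‖ ^ (2 * q) : ℝ) : ℂ)
        = ∑ jv : Fin q → Fin n, ∑ iv : Fin q → Fin n,
            (∑' k, (∏ t, φ k (x (jv t))) * ∏ t, (starRingEnd ℂ) (φ k (x (iv t))))
              * ((∏ t, u (iv t)) * ∏ t, (starRingEnd ℂ) (u (jv t))) ∧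
      0 ≤ ∑' k : 𝕂, ‖∑ i, u i * (starRingEnd ℂ) (φ k (x i))‖ ^ (2 * q) := by
  set S : 𝕂 → ℂ := fun k => ∑ i, u i * (starRingEnd ℂ) (φ k (x i)) with hSdef
  set f : (Fin q → Fin n) → (Fin q → Fin n) → 𝕂 → ℂ := fun jv iv k =>
    ((∏ t, φ k (x (jv t))) * ∏ t, (starRingEnd ℂ) (φ k (x (iv t))))
      * ((∏ t, u (iv t)) * ∏ t, (starRingEnd ℂ) (u (jv t))) with hfdef
  have hf_sum : ∀ jv iv : Fin q → Fin n, Summable (f jv iv) := by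
    intro jv iv
    set C : ℝ := (∏ t, ‖u (iv t)‖) * ∏ t, ‖u (jv t)‖ with hC
    have hC0 : 0 ≤ C := mul_nonneg (Finset.prod_nonneg fun t _ => norm_nonneg _)
      (Finset.prod_nonneg fun t _ => norm_nonneg _)
    have hg : Summable fun k =>
        (∑ t, ‖φ k (x (jv t))‖ ^ (2 * q) + ∑ t, ‖φ k (x (iv t))‖ ^ (2 * q)) * C := by
      exact (((summable_sum (fun t _ => hΦ (x (jv t)))).add
        (summable_sum (fun t _ => hΦ (x (iv t))))).mul_right C)
    apply Summable.of_norm_bounded hg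
    intro k
    have hnorm : ‖f jv iv k‖ =
        ((∏ t, ‖φ k (x (jv t))‖) * ∏ t, ‖φ k (x (iv t))‖) * C := by
      simp [hfdef, hC, norm_prod, norm_mul]
    rw [hnorm]
    refine mul_le_mul_of_nonneg_right ?_ hC0
    exact aux_prod_mul_prod_le hq _ _ (fun t => norm_nonneg _) (fun t => norm_nonneg _)
  have hkey : ∀ k, ((‖S k‖ ^ (2 * q) : ℝ) : ℂ) = ∑ jv, ∑ iv, f jv iv k := by
    intro k
    have h1 : ((‖S k‖ ^ (2 * q) : ℝ) : ℂ) = S k ^ q * (starRingEnd ℂ) (S k) ^ q := by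
      have h2 : ((‖S k‖ : ℂ)) ^ 2 = S k * (starRingEnd ℂ) (S k) := by
        rw [Complex.mul_conj, Complex.normSq_eq_norm_sq]
        push_cast
        ring
      calc ((‖S k‖ ^ (2 * q) : ℝ) : ℂ) = ((‖S k‖ : ℂ) ^ 2) ^ q := by
            push_cast; rw [← pow_mul]
        _ = (S k * (starRingEnd ℂ) (S k)) ^ q := by rw [h2]
        _ = S k ^ q * (starRingEnd ℂ) (S k) ^ q := mul_pow _ _ _
    have hSq : S k ^ q = ∑ iv : Fin q → Fin n,
        ∏ t, (u (iv t) * (starRingEnd ℂ) (φ k (x (iv t)))) := by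
      rw [hSdef]; exact Fintype.sum_pow _ q
    have hconjS : (starRingEnd ℂ) (S k) = ∑ j, (starRingEnd ℂ) (u j) * φ k (x j) := by
      rw [hSdef]; simp [map_sum]
    have hconjSq : (starRingEnd ℂ) (S k) ^ q = ∑ jv : Fin q → Fin n,
        ∏ t, ((starRingEnd ℂ) (u (jv t)) * φ k (x (jv t))) := by
      rw [hconjS]; exact Fintype.sum_pow _ q
    rw [h1, hSq, hconjSq, Finset.sum_mul_sum, Finset.sum_comm]
    refine Finset.sum_congr rfl fun jv _ => Finset.sum_congr rfl fun iv _ => ?_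
    simp only [hfdef, Finset.prod_mul_distrib]
    ring
  have hfs : Summable fun k => ((‖S k‖ ^ (2 * q) : ℝ) : ℂ) := by
    have := summable_sum (s := (Finset.univ : Finset (Fin q → Fin n)))
      (f := fun jv k => ∑ iv, f jv iv k)
      (fun jv _ => summable_sum (fun iv _ => hf_sum jv iv))
    simpa [← hkey] using this
  have hrs : Summable fun k => ‖S k‖ ^ (2 * q) := Complex.summable_ofReal.mp hfs
  constructor
  · calc ((∑' k, ‖S k‖ ^ (2 * q) : ℝ) : ℂ)
        = ∑' k, ((‖S k‖ ^ (2 * q) : ℝ) : ℂ) := Complex.ofRealCLM.map_tsum hrs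
      _ = ∑' k, ∑ jv, ∑ iv, f jv iv k := tsum_congr hkey
      _ = ∑ jv, ∑ iv, ∑' k, f jv iv k := by
          rw [Summable.tsum_finsetSum (fun jv _ => summable_sum (fun iv _ => hf_sum jv iv))]
          exact Finset.sum_congr rfl fun jv _ => Summable.tsum_finsetSum (fun iv _ => hf_sum jv iv)
      _ = ∑ jv : Fin q → Fin n, ∑ iv : Fin q → Fin n,
            (∑' k, (∏ t, φ k (x (jv t))) * ∏ t, (starRingEnd ℂ) (φ k (x (iv t))))
              * ((∏ t, u (iv t)) * ∏ t, (starRingEnd ℂ) (u (jv t))) := by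
          refine Finset.sum_congr rfl fun jv _ => Finset.sum_congr rfl fun iv _ => ?_
          exact tsum_mul_right
  · exact tsum_nonneg fun k => pow_nonneg (norm_nonneg _) _
end
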